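/- For x ∈ ℂ with |x| < 1/e, the series W₀(x) = Σ_{n=1}^{∞} ((−n)^{n−1}/n!)·xⁿ converges absolutely, and its sum satisfies the Lambert W equation W₀(x)·e^{W₀(x)} = x. -/

import Mathlib

open Finset



-- finite differences of powers vanish
lemma fwdDiff_pow_eq_zero : ∀ j m : ℕ, j < m →
    (fwdDiff (1:ℕ))^[m] (fun k : ℕ => (k : ℂ) ^ j) = 0 := by
  intro j
  induction j using Nat.strong_induction_on with
  | _ j ih =>
    intro m hm
    obtain ⟨m', rfl⟩ : ∃ m', m = m' + 1 := ⟨m - 1, by omega⟩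
    rw [Function.iterate_succ_apply]
    have hΔ : fwdDiff (1:ℕ) (fun k : ℕ => (k : ℂ) ^ j)
        = ∑ i ∈ range j, (j.choose i : ℂ) • (fun k : ℕ => (k : ℂ) ^ i) := by
      funext k
      simp only [fwdDiff, Finset.sum_apply, Pi.smul_apply, smul_eq_mul]
      rw [show ((k + 1 : ℕ) : ℂ) = (k : ℂ) + 1 by push_cast; ring, add_pow]
      rw [Finset.sum_range_succ]
      simp [mul_comm]
    rw [hΔ, fwdDiff_iter_finset_sum]
    funext y
    simp only [Finset.sum_apply, Pi.zero_apply]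
    refine Finset.sum_eq_zero fun i hi => ?_
    rw [fwdDiff_iter_const_smul]
    have hij := mem_range.mp hi
    have : (fwdDiff (1:ℕ))^[m'] (fun k : ℕ => (k : ℂ) ^ i) = 0 :=
      ih i hij m' (by omega)
    simp [this]

lemma alt_sum_pow_eq_zero {j m : ℕ} (hjm : j < m) :
    ∑ k ∈ range (m + 1), (-1 : ℂ) ^ k * (m.choose k : ℂ) * (k : ℂ) ^ j = 0 := by
  have h0 := fwdDiff_pow_eq_zero j m hjm
  have h := fwdDiff_iter_eq_sum_shift (1 : ℕ) (fun k : ℕ => (k : ℂ) ^ j) m 0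
  rw [h0] at h
  have h' : ∑ k ∈ range (m + 1), ((-1 : ℤ) ^ (m - k) * (m.choose k) : ℤ) • ((k : ℂ) ^ j) = 0 := by
    simpa using h.symm
  have key : ∀ k ∈ range (m + 1),
      (-1 : ℂ) ^ k * (m.choose k : ℂ) * (k : ℂ) ^ j
        = (-1 : ℂ) ^ m * (((-1 : ℤ) ^ (m - k) * (m.choose k) : ℤ) • ((k : ℂ) ^ j)) := by
    intro k hk
    have hkm : k ≤ m := by simpa using Nat.lt_succ_iff.mp (mem_range.mp hk)
    have hpow : (-1 : ℂ) ^ (m - k) * (-1 : ℂ) ^ k = (-1 : ℂ) ^ m := by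
      rw [← pow_add, Nat.sub_add_cancel hkm]
    push_cast [zsmul_eq_mul]
    have h2 : (-1 : ℂ) ^ (m - k) * (-1 : ℂ) ^ (m - k) = 1 := by
      rw [← pow_add, ← two_mul, pow_mul, neg_one_sq, one_pow]
    have h1 : (-1 : ℂ) ^ m * (-1 : ℂ) ^ (m - k) = (-1 : ℂ) ^ k := by
      rw [← hpow]; linear_combination ((-1 : ℂ) ^ k) * h2
    calc (-1 : ℂ) ^ k * (m.choose k : ℂ) * (k : ℂ) ^ j
        = ((-1 : ℂ) ^ m * (-1 : ℂ) ^ (m - k)) * (m.choose k : ℂ) * (k : ℂ) ^ j := by rw [h1]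
      _ = (-1 : ℂ) ^ m * ((-1 : ℂ) ^ (m - k) * (m.choose k : ℂ) * (k : ℂ) ^ j) := by ring
  rw [Finset.sum_congr rfl key, ← Finset.mul_sum, h', mul_zero]

noncomputable def lamA (n : ℕ) : ℂ := (-((n : ℂ) + 1)) ^ n / (n + 1).factorial

lemma lam_antidiag_sum_zero {m : ℕ} (hm : 0 < m) :
    ∑ p ∈ Finset.HasAntidiagonal.antidiagonal m, lamA p.1 * ((p.1 : ℂ) + 1) ^ p.2 / (p.2.factorial : ℂ) = 0 := by
  rw [Finset.Nat.sum_antidiagonal_eq_sum_range_succ_mk]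
  have hB := alt_sum_pow_eq_zero (show m < m + 1 by omega)
  rw [Finset.sum_range_succ'] at hB
  have h0 : (-1 : ℂ) ^ 0 * (((m+1).choose 0 : ℕ) : ℂ) * ((0 : ℕ) : ℂ) ^ m = 0 := by
    simp [zero_pow hm.ne']
  rw [h0, add_zero] at hB
  have hB' : ∑ k ∈ range (m + 1),
      (-1 : ℂ) ^ k * (((m+1).choose (k+1) : ℕ) : ℂ) * (((k+1 : ℕ)) : ℂ) ^ m = 0 := by
    have : ∑ k ∈ range (m + 1),
        (-1 : ℂ) ^ k * (((m+1).choose (k+1) : ℕ) : ℂ) * (((k+1 : ℕ)) : ℂ) ^ m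
        = -∑ k ∈ range (m + 1),
        (-1 : ℂ) ^ (k+1) * (((m+1).choose (k+1) : ℕ) : ℂ) * (((k+1 : ℕ)) : ℂ) ^ m := by
      rw [← Finset.sum_neg_distrib]
      exact Finset.sum_congr rfl fun k _ => by rw [pow_succ]; ring
    rw [this, hB, neg_zero]
  have key : ∀ n ∈ range (m+1), lamA n * ((n : ℂ) + 1) ^ (m - n) / ((m - n).factorial : ℂ)
      = ((((m+1).factorial : ℕ) : ℂ))⁻¹ *
        ((-1 : ℂ) ^ n * (((m+1).choose (n+1) : ℕ) : ℂ) * (((n+1 : ℕ)) : ℂ) ^ m) := by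
    intro n hn
    have hnm : n ≤ m := by have := mem_range.mp hn; omega
    have hfact : ((m+1).choose (n+1)) * (n+1).factorial * (m-n).factorial = (m+1).factorial := by
      have := Nat.choose_mul_factorial_mul_factorial (show n+1 ≤ m+1 by omega)
      simpa [Nat.succ_sub_succ] using this
    have hc : (((m+1).choose (n+1) : ℕ) : ℂ) * ((n+1).factorial : ℂ) * ((m-n).factorial : ℂ)
        = (((m+1).factorial : ℕ) : ℂ) := by exact_mod_cast congrArg (Nat.cast : ℕ → ℂ) hfact
    have e1 : (-((n : ℂ) + 1)) ^ n = (-1 : ℂ) ^ n * ((n : ℂ) + 1) ^ n := by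
      rw [neg_pow]
    have e2 : ((n : ℂ) + 1) ^ n * ((n : ℂ) + 1) ^ (m - n) = ((n : ℂ) + 1) ^ m := by
      rw [← pow_add]; congr 1; omega
    have hne1 : (((n+1).factorial : ℕ) : ℂ) ≠ 0 := by
      exact_mod_cast (Nat.factorial_ne_zero _)
    have hne2 : (((m-n).factorial : ℕ) : ℂ) ≠ 0 := by
      exact_mod_cast (Nat.factorial_ne_zero _)
    have hne3 : (((m+1).factorial : ℕ) : ℂ) ≠ 0 := by
      exact_mod_cast (Nat.factorial_ne_zero _)
    unfold lamA
    rw [e1]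
    push_cast
    field_simp
    push_cast at hc ⊢
    linear_combination ((((m+1).factorial : ℕ) : ℂ)) * e2
      - (((n:ℂ)+1)^m) * hc
  rw [Finset.sum_congr rfl key, ← Finset.mul_sum, hB', mul_zero]

noncomputable def lamC : ℕ → ℂ
  | 0 => 0
  | n + 1 => lamA n

noncomputable def lamP : FormalMultilinearSeries ℂ ℂ ℂ :=
  FormalMultilinearSeries.ofScalars ℂ lamC

lemma norm_lamA (n : ℕ) : ‖lamA n‖ = ((n : ℝ) + 1) ^ n / (n + 1).factorial := by
  unfold lamA
  rw [norm_div, norm_pow, norm_neg]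
  norm_cast

lemma norm_lamA_le (n : ℕ) : ‖lamA n‖ ≤ Real.exp 1 ^ (n + 1) := by
  rw [norm_lamA]
  have h2 : (0:ℝ) < (n + 1).factorial := by positivity
  have h1 : ((n : ℝ) + 1) ^ n ≤ ((n : ℝ) + 1) ^ (n + 1) :=
    pow_le_pow_right₀ (by push_cast; linarith [Nat.cast_nonneg (α := ℝ) n]) (Nat.le_succ n)
  have h3 := Real.pow_div_factorial_le_exp (x := ((n : ℝ) + 1)) (by positivity) (n + 1)
  calc ((n : ℝ) + 1) ^ n / (n + 1).factorial
      ≤ ((n : ℝ) + 1) ^ (n + 1) / (n + 1).factorial := by gcongr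
    _ ≤ Real.exp ((n : ℝ) + 1) := h3
    _ = Real.exp 1 ^ (n + 1) := by
        rw [← Real.exp_nat_mul]; push_cast; ring_nf

lemma lam_summable_norm {x : ℂ} (hx : ‖x‖ < 1 / Real.exp 1) :
    Summable fun n : ℕ => ‖lamA n * x ^ (n + 1)‖ := by
  have he := Real.exp_pos 1
  have hq1 : Real.exp 1 * ‖x‖ < 1 := by
    rw [lt_div_iff₀ he] at hx; linarith [hx]
  have hq0 : 0 ≤ Real.exp 1 * ‖x‖ := by positivity
  set q := Real.exp 1 * ‖x‖ with hqdef
  refine Summable.of_nonneg_of_le (fun n => norm_nonneg _) (fun n => ?_)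
    ((summable_geometric_of_lt_one hq0 hq1).mul_left q)
  rw [norm_mul, norm_pow]
  have hxq : ‖x‖ = ‖x‖ := rfl
  calc ‖lamA n‖ * ‖x‖ ^ (n + 1)
      ≤ Real.exp 1 ^ (n + 1) * ‖x‖ ^ (n + 1) := by
        apply mul_le_mul_of_nonneg_right (norm_lamA_le n) (by positivity)
    _ = q ^ (n + 1) := by rw [hxq, hqdef, mul_pow]
    _ = q * q ^ n := by ring

lemma le_radius_lamP : ENNReal.ofReal (1 / Real.exp 1) ≤ lamP.radius := by
  refine ENNReal.le_of_forall_nnreal_lt fun r hr => ?_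
  have hr' : (r : ℝ) < 1 / Real.exp 1 := by
    rw [← ENNReal.ofReal_coe_nnreal] at hr
    exact (ENNReal.ofReal_lt_ofReal_iff (by positivity)).mp hr
  apply lamP.le_radius_of_bound 1
  intro n
  have hn : ‖lamP n‖ = ‖lamC n‖ := FormalMultilinearSeries.ofScalars_norm ℂ lamC n
  rw [hn]
  match n with
  | 0 => simp [lamC]
  | n + 1 =>
    have he := Real.exp_pos 1
    have h1 : Real.exp 1 * r ≤ 1 := by
      rw [lt_div_iff₀ he] at hr'; nlinarith [hr']
    calc ‖lamC (n+1)‖ * (r : ℝ) ^ (n+1) ≤ Real.exp 1 ^ (n+1) * (r:ℝ) ^ (n+1) :=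
          mul_le_mul_of_nonneg_right (norm_lamA_le n) (by positivity)
      _ = (Real.exp 1 * r) ^ (n+1) := by rw [mul_pow]
      _ ≤ 1 ^ (n+1) := pow_le_pow_left₀ (by positivity) h1 _
      _ = 1 := one_pow _

lemma lamP_hasSum {x : ℂ} (hx : ‖x‖ < 1 / Real.exp 1) :
    HasSum (fun n : ℕ => lamA n * x ^ (n + 1)) (lamP.sum x) := by
  have hsum2 : Summable fun n : ℕ => lamA n * x ^ (n + 1) :=
    (lam_summable_norm hx).of_norm
  have hs : Summable fun n : ℕ => lamC n * x ^ n := by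
    rw [← summable_nat_add_iff 1]
    exact hsum2
  have h0 : lamP.sum x = ∑' n : ℕ, lamC n * x ^ n := by
    refine tsum_congr fun n => ?_
    rw [lamP, FormalMultilinearSeries.ofScalars_apply_eq, smul_eq_mul]
  have h1 : lamP.sum x = ∑' n : ℕ, lamA n * x ^ (n + 1) := by
    rw [h0, Summable.tsum_eq_zero_add hs]
    simp [lamC]
  rw [h1]
  exact hsum2.hasSum

set_option maxHeartbeats 1000000 in
lemma lamP_comp (w : ℂ)
    (hw : Real.exp 1 * (‖w‖ * Real.exp (‖w‖)) < 1) :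
    lamP.sum (w * Complex.exp w) = w := by
  have he := Real.exp_pos 1
  set x := w * Complex.exp w with hxdef
  have habsx : ‖x‖ ≤ ‖w‖ * Real.exp (‖w‖) := by
    rw [hxdef, norm_mul, Complex.norm_exp]
    have h1 : w.re ≤ ‖w‖ := (abs_le.mp (Complex.abs_re_le_norm w)).2
    exact mul_le_mul_of_nonneg_left (Real.exp_le_exp.mpr h1) (norm_nonneg w)
  have hx : ‖x‖ < 1 / Real.exp 1 := by
    rw [lt_div_iff₀ he]
    calc ‖x‖ * Real.exp 1 ≤ (‖w‖ * Real.exp (‖w‖)) * Real.exp 1 :=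
          mul_le_mul_of_nonneg_right habsx he.le
      _ < 1 := by rw [mul_comm]; exact hw
  -- the doubly-indexed family
  set F : ℕ × ℕ → ℂ := fun p =>
    lamA p.1 * ((p.1 : ℂ) + 1) ^ p.2 / (p.2.factorial : ℂ) * w ^ (p.1 + 1 + p.2) with hFdef
  -- rows sum to the terms of the series at x
  have hrow : ∀ n : ℕ, HasSum (fun k => F (n, k)) (lamA n * x ^ (n + 1)) := by
    intro n
    have hexp : HasSum (fun k : ℕ => (((n : ℂ) + 1) * w) ^ k / k.factorial)
        (Complex.exp (((n : ℂ) + 1) * w)) := by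
      rw [Complex.exp_eq_exp_ℂ]
      exact NormedSpace.expSeries_div_hasSum_exp (((n : ℂ) + 1) * w)
    have h2 := hexp.mul_left (lamA n * w ^ (n + 1))
    have hx1 : x ^ (n + 1) = w ^ (n + 1) * Complex.exp (((n : ℂ) + 1) * w) := by
      rw [hxdef, mul_pow]
      congr 1
      rw [show ((n : ℂ) + 1) = ((n + 1 : ℕ) : ℂ) by push_cast; ring, Complex.exp_nat_mul]
    have h3 : (fun k : ℕ => lamA n * w ^ (n + 1) * ((((n : ℂ) + 1) * w) ^ k / k.factorial))
        = fun k => F (n, k) := by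
      funext k
      rw [hFdef]
      simp only [mul_pow]
      rw [pow_add, pow_add]
      ring
    rw [h3] at h2
    rw [show lamA n * x ^ (n + 1) = lamA n * w ^ (n + 1) * Complex.exp (((n : ℂ) + 1) * w) by
      rw [hx1]; ring]
    exact h2
  -- summability of the double series
  have hFnorm : ∀ p : ℕ × ℕ, ‖F p‖
      = ‖lamA p.1‖ * (((p.1 : ℝ) + 1) ^ p.2 / (p.2.factorial : ℝ)) * ‖w‖ ^ (p.1 + 1 + p.2) := by
    intro p
    rw [hFdef]
    simp only [norm_mul, norm_div, norm_pow]
    rw [show ((p.1 : ℂ) + 1) = ((p.1 + 1 : ℕ) : ℂ) by push_cast; ring, Complex.norm_natCast,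
      Complex.norm_natCast]
    push_cast
    ring
  have hrowsum : ∀ n : ℕ, HasSum (fun k => ‖F (n, k)‖)
      (‖lamA n‖ * ‖w‖ ^ (n + 1) * Real.exp (((n : ℝ) + 1) * ‖w‖)) := by
    intro n
    have hexp : HasSum (fun k : ℕ => (((n : ℝ) + 1) * ‖w‖) ^ k / k.factorial)
        (Real.exp (((n : ℝ) + 1) * ‖w‖)) := by
      rw [Real.exp_eq_exp_ℝ]
      exact NormedSpace.expSeries_div_hasSum_exp (((n : ℝ) + 1) * ‖w‖)
    have h2 := hexp.mul_left (‖lamA n‖ * ‖w‖ ^ (n + 1))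
    have h3 : (fun k => ‖F (n, k)‖) = fun k : ℕ =>
        ‖lamA n‖ * ‖w‖ ^ (n + 1) * ((((n : ℝ) + 1) * ‖w‖) ^ k / k.factorial) := by
      funext k
      rw [hFnorm (n, k)]
      simp only [mul_pow]
      rw [pow_add, pow_add]
      ring
    rw [h3]; exact h2
  set q : ℝ := Real.exp 1 * (‖w‖ * Real.exp ‖w‖) with hqdef
  have hwnorm : ‖w‖ = ‖w‖ := rfl
  have hq0 : 0 ≤ q := by positivity
  have hq1 : q < 1 := by rw [hqdef, hwnorm]; exact hw
  have hbound : ∀ n : ℕ, ‖lamA n‖ * ‖w‖ ^ (n + 1) * Real.exp (((n : ℝ) + 1) * ‖w‖)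
      ≤ q ^ (n + 1) := by
    intro n
    have h1 : Real.exp (((n : ℝ) + 1) * ‖w‖) = Real.exp ‖w‖ ^ (n + 1) := by
      rw [show ((n : ℝ) + 1) = ((n + 1 : ℕ) : ℝ) by push_cast; ring, Real.exp_nat_mul]
    rw [h1, hqdef, mul_pow, mul_pow]
    calc ‖lamA n‖ * ‖w‖ ^ (n + 1) * Real.exp ‖w‖ ^ (n + 1)
        ≤ Real.exp 1 ^ (n + 1) * ‖w‖ ^ (n + 1) * Real.exp ‖w‖ ^ (n + 1) := by
          have := norm_lamA_le n
          have hpos : (0:ℝ) ≤ ‖w‖ ^ (n + 1) * Real.exp ‖w‖ ^ (n + 1) := by positivity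
          nlinarith [norm_nonneg (lamA n), pow_nonneg (norm_nonneg w) (n+1),
            pow_nonneg (Real.exp_pos ‖w‖).le (n+1), pow_nonneg he.le (n+1)]
      _ = Real.exp 1 ^ (n + 1) * (‖w‖ ^ (n + 1) * Real.exp ‖w‖ ^ (n + 1)) := by ring
  have hFsummable : Summable fun p : ℕ × ℕ => ‖F p‖ := by
    rw [summable_prod_of_nonneg (fun p => norm_nonneg _)]
    constructor
    · exact fun n => (hrowsum n).summable
    · refine Summable.of_nonneg_of_le (fun n => ?_) (fun n => ?_)
        (((summable_geometric_of_lt_one hq0 hq1).mul_left q))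
      · rw [(hrowsum n).tsum_eq]; positivity
      · rw [(hrowsum n).tsum_eq]
        calc ‖lamA n‖ * ‖w‖ ^ (n + 1) * Real.exp (((n : ℝ) + 1) * ‖w‖) ≤ q ^ (n + 1) :=
              hbound n
          _ = q * q ^ n := by ring
  obtain ⟨S, hFS⟩ : Summable F := hFsummable.of_norm
  -- identify S with lamP.sum x
  have hS1 : HasSum (fun n : ℕ => lamA n * x ^ (n + 1)) S := hFS.prod_fiberwise hrow
  have hSx : S = lamP.sum x := hS1.unique (lamP_hasSum hx)
  -- regroup along antidiagonals
  have hsig : HasSum (fun p : (Σ m : ℕ, Finset.HasAntidiagonal.antidiagonal m) => F p.2) S :=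
    (Finset.HasAntidiagonal.sigmaAntidiagonalEquivProd.hasSum_iff).mpr hFS
  have hfiber : ∀ m : ℕ, HasSum (fun c : Finset.HasAntidiagonal.antidiagonal m => F c.1)
      (∑ p ∈ Finset.HasAntidiagonal.antidiagonal m, F p) := by
    intro m
    have := hasSum_fintype (fun c : Finset.HasAntidiagonal.antidiagonal m => F c.1)
    rwa [Finset.sum_coe_sort (Finset.HasAntidiagonal.antidiagonal m) F] at this
  have hdiag : HasSum (fun m : ℕ => ∑ p ∈ Finset.HasAntidiagonal.antidiagonal m, F p) S :=
    hsig.sigma hfiber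
  -- compute the diagonal sums
  have hdiagval : ∀ m : ℕ, (∑ p ∈ Finset.HasAntidiagonal.antidiagonal m, F p)
      = (if m = 0 then w else 0) := by
    intro m
    have hsum : ∑ p ∈ Finset.HasAntidiagonal.antidiagonal m, F p
        = (∑ p ∈ Finset.HasAntidiagonal.antidiagonal m,
            lamA p.1 * ((p.1 : ℂ) + 1) ^ p.2 / (p.2.factorial : ℂ)) * w ^ (m + 1) := by
      rw [Finset.sum_mul]
      refine Finset.sum_congr rfl fun p hp => ?_
      have hpm : p.1 + p.2 = m := Finset.HasAntidiagonal.mem_antidiagonal.mp hp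
      rw [hFdef]
      simp only
      rw [show p.1 + 1 + p.2 = m + 1 by omega]
    rcases Nat.eq_zero_or_pos m with hm | hm
    · subst hm
      simp only [if_pos rfl]
      rw [hsum]
      rw [Finset.Nat.antidiagonal_zero]
      simp [lamA]
    · rw [if_neg hm.ne', hsum, lam_antidiag_sum_zero hm, zero_mul]
  have hw' : HasSum (fun m : ℕ => (if m = 0 then w else 0)) S := by
    rw [← funext hdiagval]; exact hdiag
  have : S = w := hw'.unique (hasSum_ite_eq 0 w)
  rw [← hSx, this]


/-- For `x ∈ ℂ` with `|x| < 1/e`, the series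
`W₀(x) = Σ_{n=1}^{∞} ((−n)^{n−1}/n!)·xⁿ` converges absolutely, and its sum
satisfies the Lambert W equation `W₀(x)·e^{W₀(x)} = x`.
(The series is reindexed so that the summation index `n : ℕ` corresponds to the
term of the original series with index `n + 1`.) -/
theorem lambertW_principal_series
    (x : ℂ) (hx : ‖x‖ < 1 / Real.exp 1)
    (W : ℂ)
    (hW : W = ∑' n : ℕ,
      ((-((n : ℂ) + 1)) ^ n / (n + 1).factorial) * x ^ (n + 1)) :
    (Summable fun n : ℕ =>
      ‖((-((n : ℂ) + 1)) ^ n / (n + 1).factorial) * x ^ (n + 1)‖) ∧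
    W * Complex.exp W = x := by
  have he := Real.exp_pos 1
  have hsum : Summable fun n : ℕ => ‖lamA n * x ^ (n + 1)‖ := lam_summable_norm hx
  refine ⟨hsum, ?_⟩
  have hWx : W = lamP.sum x := by
    rw [hW, ← (lamP_hasSum hx).tsum_eq]
    simp only [lamA]
  set U := Metric.ball (0:ℂ) (1 / Real.exp 1) with hUdef
  have hUopen : IsOpen U := Metric.isOpen_ball
  have hUconn : IsPreconnected U := (convex_ball (0:ℂ) _).isPreconnected
  have h0U : (0:ℂ) ∈ U := by
    rw [hUdef, Metric.mem_ball, dist_self]; positivity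
  have hrad : 0 < lamP.radius :=
    lt_of_lt_of_le (by rw [ENNReal.ofReal_pos]; positivity) le_radius_lamP
  have hball := lamP.hasFPowerSeriesOnBall hrad
  have hana : AnalyticOnNhd ℂ lamP.sum (Metric.eball 0 lamP.radius) := hball.analyticOnNhd
  have hUsub : U ⊆ Metric.eball (0:ℂ) lamP.radius := by
    intro z hz
    rw [Metric.mem_eball, edist_dist]
    calc ENNReal.ofReal (dist z 0) < ENNReal.ofReal (1 / Real.exp 1) := by
          rw [ENNReal.ofReal_lt_ofReal_iff (by positivity)]
          exact Metric.mem_ball.mp hz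
      _ ≤ lamP.radius := le_radius_lamP
  have hgana : AnalyticOnNhd ℂ lamP.sum U := hana.mono hUsub
  have hgdiff : DifferentiableOn ℂ lamP.sum U := fun z hz =>
    ((hgana z hz).differentiableAt).differentiableWithinAt
  have h1 : AnalyticOnNhd ℂ (fun z => lamP.sum z * Complex.exp (lamP.sum z)) U := by
    apply DifferentiableOn.analyticOnNhd ?_ hUopen
    exact hgdiff.mul (Complex.differentiable_exp.comp_differentiableOn hgdiff)
  have h2 : AnalyticOnNhd ℂ (fun z : ℂ => z) U :=
    (differentiable_id.differentiableOn).analyticOnNhd hUopen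
  have hev : (fun z => lamP.sum z * Complex.exp (lamP.sum z)) =ᶠ[nhds (0:ℂ)]
      (fun z : ℂ => z) := by
    set f : ℂ → ℂ := fun w => w * Complex.exp w with hfdef
    have hfan : AnalyticAt ℂ f 0 :=
      (differentiable_id.mul Complex.differentiable_exp).analyticAt 0
    have hf0 : f 0 = 0 := by rw [hfdef]; simp
    have hnotconst : ¬ (∀ᶠ w in nhds (0:ℂ), f w = f 0) := by
      intro h
      have h' : ∀ᶠ w in nhdsWithin (0:ℂ) {(0:ℂ)}ᶜ, f w = 0 :=
        (h.filter_mono nhdsWithin_le_nhds).mono (fun w hw => by rw [hw, hf0])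
      have hne : ∀ᶠ w in nhdsWithin (0:ℂ) {(0:ℂ)}ᶜ, f w ≠ 0 :=
        eventually_mem_nhdsWithin.mono (by
          intro w hw
          simp only [Set.mem_compl_iff, Set.mem_singleton_iff] at hw
          rw [hfdef]
          simp [Complex.exp_ne_zero, hw])
      obtain ⟨w, hw1, hw2⟩ := (h'.and hne).exists
      exact hw2 hw1
    have hmap : nhds (f 0) ≤ Filter.map f (nhds 0) :=
      hfan.eventually_constant_or_nhds_le_map_nhds.resolve_left hnotconst
    rw [hf0] at hmap
    set V : Set ℂ := {w : ℂ | Real.exp 1 * (‖w‖ * Real.exp (‖w‖)) < 1}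
      with hVdef
    have hVopen : IsOpen V := by
      have hc : Continuous fun w : ℂ =>
          Real.exp 1 * (‖w‖ * Real.exp (‖w‖)) := by
        apply continuous_const.mul
        exact continuous_norm.mul (Real.continuous_exp.comp continuous_norm)
      exact isOpen_lt hc continuous_const
    have h0V : (0:ℂ) ∈ V := by
      rw [hVdef]; simp
    have hVnhd : V ∈ nhds (0:ℂ) := hVopen.mem_nhds h0V
    have himg : f '' V ∈ Filter.map f (nhds (0:ℂ)) := Filter.image_mem_map hVnhd
    have himg' : f '' V ∈ nhds (0:ℂ) := hmap himg
    apply Filter.mem_of_superset himg'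
    rintro y ⟨w, hwV, rfl⟩
    have hcomp := lamP_comp w hwV
    simp only [Set.mem_setOf_eq]
    show lamP.sum (w * Complex.exp w) * Complex.exp (lamP.sum (w * Complex.exp w))
        = w * Complex.exp w
    rw [hcomp]
  have heq := h1.eqOn_of_preconnected_of_eventuallyEq h2 hUconn h0U hev
  have hxU : x ∈ U := by
    rw [hUdef, Metric.mem_ball, dist_zero_right]
    exact hx
  have := heq hxU
  simp only at this
  rw [hWx]
  exact this
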